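/- Let X = ℂ³ ∖ {1 + z₁z₂z₃ = 0} with the standard symplectic form. Then the functions f₁ = log|1 + z₁z₂z₃|, f₂ = |z₁|² − |z₂|², f₃ = |z₁|² − |z₃|² pairwise Poisson commute on X. -/

import Mathlib

/-- Poisson bracket on ℂ³ ≅ ℝ⁶ associated to ω = Σₖ dxₖ∧dyₖ. -/
noncomputable def poisson3 (f g : ℂ × ℂ × ℂ → ℝ) (p : ℂ × ℂ × ℂ) : ℝ :=
  (fderiv ℝ f p (1, 0, 0) * fderiv ℝ g p (Complex.I, 0, 0)
      - fderiv ℝ f p (Complex.I, 0, 0) * fderiv ℝ g p (1, 0, 0))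
    + (fderiv ℝ f p (0, 1, 0) * fderiv ℝ g p (0, Complex.I, 0)
      - fderiv ℝ f p (0, Complex.I, 0) * fderiv ℝ g p (0, 1, 0))
    + (fderiv ℝ f p (0, 0, 1) * fderiv ℝ g p (0, 0, Complex.I)
      - fderiv ℝ f p (0, 0, Complex.I) * fderiv ℝ g p (0, 0, 1))

noncomputable def posF1 (p : ℂ × ℂ × ℂ) : ℝ := Real.log ‖1 + p.1 * p.2.1 * p.2.2‖
noncomputable def posF2 (p : ℂ × ℂ × ℂ) : ℝ := ‖p.1‖ ^ 2 - ‖p.2.1‖ ^ 2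
noncomputable def posF3 (p : ℂ × ℂ × ℂ) : ℝ := ‖p.1‖ ^ 2 - ‖p.2.2‖ ^ 2

lemma hasFDerivAt_normSq' (w : ℂ) :
    HasFDerivAt Complex.normSq
      ((2 * w.re) • Complex.reCLM + (2 * w.im) • Complex.imCLM) w := by
  have h1 : HasFDerivAt (fun z : ℂ => z.re * z.re + z.im * z.im)
      ((w.re • (Complex.reCLM : ℂ →L[ℝ] ℝ) + w.re • Complex.reCLM)
        + (w.im • (Complex.imCLM : ℂ →L[ℝ] ℝ) + w.im • Complex.imCLM)) w := by
    exact (Complex.reCLM.hasFDerivAt.mul Complex.reCLM.hasFDerivAt).add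
      (Complex.imCLM.hasFDerivAt.mul Complex.imCLM.hasFDerivAt)
  have e : Complex.normSq = fun z : ℂ => z.re * z.re + z.im * z.im := by
    funext z; simp [Complex.normSq_apply]
  rw [e]
  convert h1 using 1
  ext v <;> simp <;> ring


/-- On X = ℂ³ ∖ {1 + z₁z₂z₃ = 0}, the functions f₁ = log|1 + z₁z₂z₃|,
f₂ = |z₁|² − |z₂|², f₃ = |z₁|² − |z₃|² pairwise Poisson commute. -/
theorem stmt3 :
    ∀ p : ℂ × ℂ × ℂ, 1 + p.1 * p.2.1 * p.2.2 ≠ 0 →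
      poisson3 posF1 posF2 p = 0 ∧ poisson3 posF1 posF3 p = 0 ∧ poisson3 posF2 posF3 p = 0 := by
  intro p hp
  set w : ℂ := 1 + p.1 * p.2.1 * p.2.2 with hw
  have hN : Complex.normSq w ≠ 0 := by
    simpa [Complex.normSq_eq_zero] using hp
  -- derivatives of coordinates
  have hz1 : HasFDerivAt (fun q : ℂ × ℂ × ℂ => q.1)
      (ContinuousLinearMap.fst ℝ ℂ (ℂ × ℂ)) p := hasFDerivAt_fst
  have hz2 : HasFDerivAt (fun q : ℂ × ℂ × ℂ => q.2.1)
      ((ContinuousLinearMap.fst ℝ ℂ ℂ).comp (ContinuousLinearMap.snd ℝ ℂ (ℂ × ℂ))) p :=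
    hasFDerivAt_snd.fst
  have hz3 : HasFDerivAt (fun q : ℂ × ℂ × ℂ => q.2.2)
      ((ContinuousLinearMap.snd ℝ ℂ ℂ).comp (ContinuousLinearMap.snd ℝ ℂ (ℂ × ℂ))) p :=
    hasFDerivAt_snd.snd
  have hg := ((hz1.mul hz2).mul hz3).const_add (1 : ℂ)
  -- posF1
  have e1 : posF1 = fun q : ℂ × ℂ × ℂ =>
      Real.log (Complex.normSq (1 + q.1 * q.2.1 * q.2.2)) * (2:ℝ)⁻¹ := by
    funext q
    rw [posF1, Complex.norm_def, Real.log_sqrt (Complex.normSq_nonneg _), div_eq_mul_inv]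
  have h1 := ((((hasFDerivAt_normSq' w).comp p hg).log hN).mul_const ((2:ℝ)⁻¹))
  have h1' : HasFDerivAt (fun q : ℂ × ℂ × ℂ =>
      Real.log (Complex.normSq (1 + q.1 * q.2.1 * q.2.2)) * (2:ℝ)⁻¹) _ p := h1
  -- posF2
  have e2 : posF2 = fun q : ℂ × ℂ × ℂ => Complex.normSq q.1 - Complex.normSq q.2.1 := by
    funext q; simp [posF2, Complex.sq_norm]
  have h2 := ((hasFDerivAt_normSq' p.1).comp p hz1).sub
    ((hasFDerivAt_normSq' p.2.1).comp p hz2)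
  have h2' : HasFDerivAt (fun q : ℂ × ℂ × ℂ =>
      Complex.normSq q.1 - Complex.normSq q.2.1) _ p := h2
  -- posF3
  have e3 : posF3 = fun q : ℂ × ℂ × ℂ => Complex.normSq q.1 - Complex.normSq q.2.2 := by
    funext q; simp [posF3, Complex.sq_norm]
  have h3 := ((hasFDerivAt_normSq' p.1).comp p hz1).sub
    ((hasFDerivAt_normSq' p.2.2).comp p hz3)
  have h3' : HasFDerivAt (fun q : ℂ × ℂ × ℂ =>
      Complex.normSq q.1 - Complex.normSq q.2.2) _ p := h3
  refine ⟨?_, ?_, ?_⟩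
  · rw [poisson3, e1, e2, h1'.fderiv, h2'.fderiv]
    simp only [ContinuousLinearMap.add_apply, ContinuousLinearMap.smul_apply,
      ContinuousLinearMap.coe_comp', Function.comp_apply, ContinuousLinearMap.coe_fst',
      ContinuousLinearMap.coe_snd', ContinuousLinearMap.sub_apply,
      Complex.reCLM_apply, Complex.imCLM_apply, smul_eq_mul,
      Complex.add_re, Complex.add_im, Complex.mul_re, Complex.mul_im,
      Complex.one_re, Complex.one_im, Complex.I_re, Complex.I_im,
      Complex.zero_re, Complex.zero_im]
    field_simp
    ring
  · rw [poisson3, e1, e3, h1'.fderiv, h3'.fderiv]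
    simp only [ContinuousLinearMap.add_apply, ContinuousLinearMap.smul_apply,
      ContinuousLinearMap.coe_comp', Function.comp_apply, ContinuousLinearMap.coe_fst',
      ContinuousLinearMap.coe_snd', ContinuousLinearMap.sub_apply,
      Complex.reCLM_apply, Complex.imCLM_apply, smul_eq_mul,
      Complex.add_re, Complex.add_im, Complex.mul_re, Complex.mul_im,
      Complex.one_re, Complex.one_im, Complex.I_re, Complex.I_im,
      Complex.zero_re, Complex.zero_im]
    field_simp
    simp only [hw, Pi.mul_apply, Complex.add_re, Complex.add_im, Complex.mul_re, Complex.mul_im,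
      Complex.one_re, Complex.one_im]
    ring
  · rw [poisson3, e2, e3, h2'.fderiv, h3'.fderiv]
    simp only [ContinuousLinearMap.add_apply, ContinuousLinearMap.smul_apply,
      ContinuousLinearMap.coe_comp', Function.comp_apply, ContinuousLinearMap.coe_fst',
      ContinuousLinearMap.coe_snd', ContinuousLinearMap.sub_apply,
      Complex.reCLM_apply, Complex.imCLM_apply, smul_eq_mul,
      Complex.add_re, Complex.add_im, Complex.mul_re, Complex.mul_im,
      Complex.one_re, Complex.one_im, Complex.I_re, Complex.I_im,
      Complex.zero_re, Complex.zero_im]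
    field_simp
    ring
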